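/- In the game R-Wythoff, the set of P-positions is exactly A = {(⌊φn⌋, ⌊φn⌋ + n) : n ≥ 0} (up to swapping coordinates), where φ = (1+√5)/2. That is: (i) no legal move from a position in A lands in A, and (ii) from every position not in A there is a legal move into A. -/

import Mathlib

noncomputable section

/-- The golden ratio. -/
def phi : ℝ := (1 + Real.sqrt 5) / 2

/-- Minimum excluded value of a set of naturals. -/
def mex (S : Set ℕ) : ℕ := sInf {n | n ∉ S}

/-- Sort a pair of naturals into nondecreasing order. -/
def sortPair (p : ℕ × ℕ) : ℕ × ℕ := (min p.1 p.2, max p.1 p.2)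

/-- Moves of R-Wythoff (positions are unordered pairs of pile sizes): remove a
positive number of tokens from the larger pile (either pile if equal), or an
equal positive number of tokens from both piles. -/
def RMove (p q : ℕ × ℕ) : Prop :=
  (∃ t < max p.1 p.2, sortPair q = sortPair (min p.1 p.2, t)) ∨
  (∃ k, 0 < k ∧ k ≤ min p.1 p.2 ∧ sortPair q = (min p.1 p.2 - k, max p.1 p.2 - k))

lemma RMove.sum_lt {p q : ℕ × ℕ} (h : RMove p q) : q.1 + q.2 < p.1 + p.2 := by
  rcases h with ⟨t, ht, hq⟩ | ⟨k, hk0, hk, hq⟩ <;>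
  · simp only [sortPair, Prod.mk.injEq] at hq
    omega

/-- Sprague–Grundy function of R-Wythoff. -/
noncomputable def grundyR : ℕ × ℕ → ℕ
  | p => mex {v | ∃ q, ∃ _ : RMove p q, grundyR q = v}
termination_by p => p.1 + p.2
decreasing_by exact RMove.sum_lt (by assumption)

/-- P-positions of R-Wythoff: a position is P iff every move leads to a
non-P (i.e. N) position. -/
def RPPos : ℕ × ℕ → Prop
  | p => ∀ q, RMove p q → ¬ RPPos q
termination_by p => p.1 + p.2
decreasing_by exact RMove.sum_lt (by assumption)

/-! ### Auxiliary facts about the golden ratio and Beatty sequences -/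

lemma phi_eq_gold : phi = Real.goldenRatio := rfl

lemma one_lt_phi : 1 < phi := phi_eq_gold ▸ Real.one_lt_goldenRatio

lemma phi_mul_self : phi * phi = phi + 1 := by
  have := Real.goldenRatio_sq
  rw [sq] at this
  rw [phi_eq_gold]; exact this

lemma phi_conj : Real.HolderConjugate phi (phi + 1) := by
  rw [Real.holderConjugate_iff]
  constructor
  · exact one_lt_phi
  · have h0 : (0:ℝ) < phi := lt_trans one_pos one_lt_phi
    have h1 : (0:ℝ) < phi + 1 := by linarith
    field_simp
    nlinarith [phi_mul_self]

/-- `Aa n = ⌊φ n⌋`. -/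
def Aa (n : ℕ) : ℕ := ⌊phi * n⌋₊

lemma phi_nonneg : (0:ℝ) ≤ phi := le_of_lt (lt_trans one_pos one_lt_phi)

lemma Aa_zero : Aa 0 = 0 := by simp [Aa]

lemma le_Aa (n : ℕ) : n ≤ Aa n := by
  apply Nat.le_floor
  have : (1:ℝ) * n ≤ phi * n := by
    apply mul_le_mul_of_nonneg_right (le_of_lt one_lt_phi) (by positivity)
  linarith

lemma Aa_strictMono : StrictMono Aa := by
  apply strictMono_nat_of_lt_succ
  intro n
  have h : Aa n + 1 ≤ Aa (n + 1) := by
    apply Nat.le_floor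
    have h1 : (⌊phi * n⌋₊ : ℝ) ≤ phi * n :=
      Nat.floor_le (mul_nonneg phi_nonneg (Nat.cast_nonneg n))
    push_cast
    have : phi * (n + 1) = phi * n + phi := by ring
    rw [this]
    have := one_lt_phi
    simp only [Aa]
    linarith
  omega

/-- Cast of `Aa` into `ℤ` equals the integer floor. -/
lemma Aa_int (n : ℕ) : (Aa n : ℤ) = ⌊(n : ℝ) * phi⌋ := by
  rw [Aa, mul_comm]
  exact Int.natCast_floor_eq_floor (mul_nonneg (Nat.cast_nonneg n) phi_nonneg)

lemma beatty_phi (n : ℕ) : beattySeq phi (n : ℤ) = (Aa n : ℤ) := by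
  rw [beattySeq, Aa_int]
  norm_num

lemma beatty_phi' (n : ℕ) : beattySeq (phi + 1) (n : ℤ) = ((Aa n + n : ℕ) : ℤ) := by
  rw [beattySeq]
  have : ((n : ℤ) : ℝ) * (phi + 1) = (n : ℝ) * phi + (n : ℤ) := by push_cast; ring
  rw [this, Int.floor_add_intCast, ← Aa_int]
  push_cast
  ring

lemma beatty_partition (j : ℕ) (hj : 0 < j) :
    ((j : ℤ) ∈ {x | ∃ k > 0, beattySeq phi k = x} ∧
      (j : ℤ) ∉ {x | ∃ k > 0, beattySeq (phi + 1) k = x}) ∨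
    ((j : ℤ) ∈ {x | ∃ k > 0, beattySeq (phi + 1) k = x} ∧
      (j : ℤ) ∉ {x | ∃ k > 0, beattySeq phi k = x}) := by
  have hsd := Irrational.beattySeq_symmDiff_beattySeq_pos phi_conj
    (phi_eq_gold ▸ Real.goldenRatio_irrational)
  have : (j : ℤ) ∈ {n : ℤ | 0 < n} := by simp; exact_mod_cast hj
  rw [← hsd] at this
  rw [Set.mem_symmDiff] at this
  exact this

lemma Aa_cover (j : ℕ) (hj : 0 < j) :
    (∃ n, 0 < n ∧ Aa n = j) ∨ (∃ n, 0 < n ∧ Aa n + n = j) := by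
  rcases beatty_partition j hj with ⟨⟨k, hk, hkj⟩, -⟩ | ⟨⟨k, hk, hkj⟩, -⟩
  · left
    refine ⟨k.toNat, by omega, ?_⟩
    have hknat : (k.toNat : ℤ) = k := Int.toNat_of_nonneg (le_of_lt hk)
    have := beatty_phi k.toNat
    rw [hknat, hkj] at this
    exact_mod_cast this.symm
  · right
    refine ⟨k.toNat, by omega, ?_⟩
    have hknat : (k.toNat : ℤ) = k := Int.toNat_of_nonneg (le_of_lt hk)
    have := beatty_phi' k.toNat
    rw [hknat, hkj] at this
    exact_mod_cast this.symm

lemma Aa_disjoint (n m : ℕ) (hn : 0 < n) (hm : 0 < m) : Aa n ≠ Aa m + m := by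
  intro h
  have hj : 0 < Aa n := lt_of_lt_of_le hn (le_Aa n)
  rcases beatty_partition (Aa n) hj with ⟨-, h2⟩ | ⟨-, h2⟩
  · apply h2
    refine ⟨(m : ℤ), by exact_mod_cast hm, ?_⟩
    rw [beatty_phi' m, ← h]
  · apply h2
    refine ⟨(n : ℤ), by exact_mod_cast hn, ?_⟩
    rw [beatty_phi n]

/-! ### The P-set -/

/-- Membership in the claimed P-set. -/
def InA (p : ℕ × ℕ) : Prop := ∃ n, sortPair p = (Aa n, Aa n + n)

lemma sortPair_of_le {a b : ℕ} (h : a ≤ b) : sortPair (a, b) = (a, b) := by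
  simp [sortPair, min_eq_left h, max_eq_right h]

/-- No move between two positions of `A`. -/
lemma no_move_inA {p q : ℕ × ℕ} (hp : InA p) (hq : InA q) (h : RMove p q) : False := by
  obtain ⟨n, hpn⟩ := hp
  obtain ⟨m, hqm⟩ := hq
  simp only [sortPair, Prod.mk.injEq] at hpn hqm
  obtain ⟨hx, hy⟩ := hpn
  obtain ⟨hqx, hqy⟩ := hqm
  rcases h with ⟨t, ht, heq⟩ | ⟨k, hk0, hk, heq⟩
  · simp only [sortPair, Prod.mk.injEq] at heq
    rw [hqx, hqy, hx] at heq
    rw [hy] at ht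
    obtain ⟨h1, h2⟩ := heq
    rcases le_total (Aa n) t with hc | hc
    · rw [min_eq_left hc] at h1
      rw [max_eq_right hc] at h2
      have : m = n := Aa_strictMono.injective h1
      omega
    · rw [min_eq_right hc] at h1
      rw [max_eq_left hc] at h2
      -- Aa m + m = Aa n, Aa m = t
      rcases Nat.eq_zero_or_pos m with hm | hm
      · subst hm
        rw [Aa_zero] at h1 h2
        have := le_Aa n
        omega
      · rcases Nat.eq_zero_or_pos n with hn | hn
        · subst hn
          rw [Aa_zero] at h2 ht
          omega
        · exact Aa_disjoint n m hn hm h2.symm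
  · rw [hx, hy] at heq
    simp only [sortPair, Prod.mk.injEq] at heq
    rw [hqx, hqy] at heq
    have hle := le_Aa n
    -- Aa m = Aa n - k, Aa m + m = Aa n + n - k  with 0 < k ≤ Aa n  ⇒ m = n
    have hmn : m = n := by omega
    subst hmn
    omega

/-- From any position not in `A`, there is a move into `A`. -/
lemma exists_move_inA (p : ℕ × ℕ) (hp : ¬ InA p) : ∃ q, RMove p q ∧ InA q := by
  set x := min p.1 p.2 with hxdef
  set y := max p.1 p.2 with hydef
  have hxy : x ≤ y := min_le_max
  set d := y - x with hddef
  have hyd : y = x + d := by omega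
  rcases lt_trichotomy x (Aa d) with hc | hc | hc
  · -- x < Aa d ; then d ≥ 1
    have hd1 : 0 < d := by
      rcases Nat.eq_zero_or_pos d with h0 | h0
      · rw [h0, Aa_zero] at hc; omega
      · exact h0
    rcases Nat.eq_zero_or_pos x with hx0 | hx0
    · -- x = 0 : move the large pile to 0
      refine ⟨(0, 0), ?_, ?_⟩
      · exact Or.inl ⟨0, by omega, by simp only [sortPair, Prod.mk.injEq] <;> omega⟩
      · exact ⟨0, by have h0 := Aa_zero; simp only [sortPair, Prod.mk.injEq] <;> omega⟩
    · rcases Aa_cover x hx0 with ⟨n, hn, hAn⟩ | ⟨n, hn, hBn⟩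
      · -- x = Aa n with n < d : move larger pile down to Aa n + n
        have hnd : n < d := Aa_strictMono.lt_iff_lt.mp (by omega)
        refine ⟨(x, Aa n + n), ?_, ?_⟩
        · exact Or.inl ⟨Aa n + n, by omega, by simp only [sortPair, Prod.mk.injEq] <;> omega⟩
        · exact ⟨n, by simp only [sortPair, Prod.mk.injEq] <;> omega⟩
      · -- x = Aa n + n : move larger pile down to Aa n
        have hAalt : Aa n < x := by omega
        refine ⟨(Aa n, x), ?_, ?_⟩
        · exact Or.inl ⟨Aa n, by omega, by simp only [sortPair, Prod.mk.injEq] <;> omega⟩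
        · exact ⟨n, by simp only [sortPair, Prod.mk.injEq] <;> omega⟩
  · -- x = Aa d : p itself is in A, contradiction
    exact absurd ⟨d, by simp only [sortPair, Prod.mk.injEq] <;> omega⟩ hp
  · -- Aa d < x : diagonal move
    refine ⟨(Aa d, Aa d + d), ?_, ?_⟩
    · exact Or.inr ⟨x - Aa d, by omega, by omega,
        by simp only [sortPair, Prod.mk.injEq] <;> omega⟩
    · exact ⟨d, by simp only [sortPair, Prod.mk.injEq] <;> omega⟩

lemma RPPos_iff_InA : ∀ N (p : ℕ × ℕ), p.1 + p.2 < N → (RPPos p ↔ InA p) := by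
  intro N
  induction N with
  | zero => intro p hp; omega
  | succ N ih =>
    intro p hp
    constructor
    · intro hP
      by_contra hA
      obtain ⟨q, hmv, hq⟩ := exists_move_inA p hA
      have hqlt : q.1 + q.2 < N := by
        have := hmv.sum_lt
        omega
      have : RPPos q := (ih q hqlt).2 hq
      rw [RPPos] at hP
      exact hP q hmv this
    · intro hA
      rw [RPPos]
      intro q hmv hq
      have hqlt : q.1 + q.2 < N := by
        have := hmv.sum_lt
        omega
      have : InA q := (ih q hqlt).1 hq
      exact no_move_inA hA this hmv

/-- The P-positions of R-Wythoff are exactly the pairs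
`(⌊φn⌋, ⌊φn⌋ + n)`, `n ≥ 0`, up to swapping coordinates. -/
theorem RWythoff_P_positions (a b : ℕ) :
    RPPos (a, b) ↔ ∃ n : ℕ, sortPair (a, b) = (⌊phi * n⌋₊, ⌊phi * n⌋₊ + n) := by
  exact RPPos_iff_InA (a + b + 1) (a, b) (by omega)

end
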